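/- Let A be a commutative ring with 2 invertible and B a commutative A-algebra, with C_n = B^{⊗(n+1)}/(∑_{i<j} I_{ij}²), identifying Λⁿ Ω¹_{B/A} with the ideal ∏_{j=1}^n J̃_{j−1,j} ⊆ C_n via Φ_n. Then the alternating sum e_n = ∑_{j=0}^{n+1} (−1)^j d_j of the unit-insertion maps induces, under these identifications, the exterior derivative d : Λⁿ Ω¹_{B/A} → Λ^{n+1} Ω¹_{B/A}; i.e., Ψ_{n+1}(e_n(x)) = d(Ψ_n(x)) for all x ∈ ⋂_{j=1}^n J̃_{j−1,j}. -/

import Mathlib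

set_option maxHeartbeats 1000000
set_option synthInstance.maxHeartbeats 400000

open scoped TensorProduct
open PiTensorProduct

variable (A B : Type) [CommRing A] [CommRing B] [Algebra A B]

abbrev Bpow (n : ℕ) : Type := ⨂[A] (_ : Fin n), B

noncomputable def rmap {m n : ℕ} (r : Fin m → Fin n) : Bpow A B m →ₐ[A] Bpow A B n :=
  PiTensorProduct.liftAlgHom
    ((MultilinearMap.mkPiAlgebra A (Fin m) (Bpow A B n)).compLinearMap
      (fun k => (PiTensorProduct.singleAlgHom (R := A) (A := fun _ : Fin n => B) (r k)).toLinearMap))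
    (by simp [← PiTensorProduct.one_def])
    (by intro x y
        simp only [MultilinearMap.compLinearMap_apply, MultilinearMap.mkPiAlgebra_apply,
          Pi.mul_apply, AlgHom.toLinearMap_apply, _root_.map_mul, Finset.prod_mul_distrib])

noncomputable def mergeN (n i j : ℕ) (hij : i < j) (hj : j ≤ n) :
    Bpow A B (n+1) →ₐ[A] Bpow A B n :=
  rmap A B (fun k => if h1 : k.val < j then ⟨k.val, by omega⟩
    else if h2 : k.val = j then ⟨i, by omega⟩
    else ⟨k.val - 1, by have := k.isLt; omega⟩)

noncomputable def Iideal (n i j : ℕ) (hij : i < j) (hj : j ≤ n) : Ideal (Bpow A B (n+1)) :=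
  RingHom.ker (mergeN A B n i j hij hj)

noncomputable def Kideal (n : ℕ) : Ideal (Bpow A B (n+1)) :=
  ⨆ (i : ℕ) (j : ℕ) (hij : i < j) (hj : j ≤ n), (Iideal A B n i j hij hj) ^ 2

abbrev Cq (n : ℕ) : Type := Bpow A B (n+1) ⧸ Kideal A B n

noncomputable def Jt (n i j : ℕ) (hij : i < j) (hj : j ≤ n) : Ideal (Cq A B n) :=
  Ideal.map (Ideal.Quotient.mk (Kideal A B n)) (Iideal A B n i j hij hj)

noncomputable def dElt (n i j : ℕ) (hi : i ≤ n) (hj : j ≤ n) (y : B) : Bpow A B (n+1) :=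
  PiTensorProduct.singleAlgHom (R := A) (A := fun _ : Fin (n+1) => B) ⟨j, by omega⟩ y
    - PiTensorProduct.singleAlgHom (R := A) (A := fun _ : Fin (n+1) => B) ⟨i, by omega⟩ y

noncomputable def insN (n j : ℕ) (hj : j ≤ n+1) : Bpow A B (n+1) →ₐ[A] Bpow A B (n+2) :=
  rmap A B (fun k => if h : k.val < j then ⟨k.val, by omega⟩
    else ⟨k.val + 1, by have := k.isLt; omega⟩)

noncomputable def eN (n : ℕ) : Bpow A B (n+1) →ₗ[A] Bpow A B (n+2) :=
  ∑ j : Fin (n+2), ((-1 : ℤ) ^ (j : ℕ)) • (insN A B n j (by omega)).toLinearMap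

noncomputable def smashG (m n N : ℕ) (h : N = m + n) (x : Bpow A B (m+1)) (y : Bpow A B (n+1)) :
    Bpow A B (N+1) :=
  rmap A B (fun k : Fin (m+1) => (⟨k.val, by have := k.isLt; omega⟩ : Fin (N+1))) x *
  rmap A B (fun k : Fin (n+1) => (⟨m + k.val, by have := k.isLt; omega⟩ : Fin (N+1))) y

/-- The wedge `dy₁ ∧ ⋯ ∧ dyₙ`-style elements of the `n`-th exterior power. -/
noncomputable def wedgeD (n : ℕ) (f : Fin n → Ω[B⁄A]) : ⋀[B]^n (Ω[B⁄A]) :=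
  ⟨ExteriorAlgebra.ιMulti B n f, ExteriorAlgebra.ιMulti_range B n (Set.mem_range_self f)⟩

/-- `B`-algebra structure on `C_n` through the 0-th tensor factor. -/
noncomputable instance instAlgebraBCq (n : ℕ) : Algebra B (Cq A B n) :=
  ((Ideal.Quotient.mk (Kideal A B n)).comp
    (PiTensorProduct.singleAlgHom (R := A) (A := fun _ : Fin (n+1) => B) 0).toRingHom).toAlgebra

lemma rmap_tprod {m k : ℕ} (r : Fin m → Fin k) (y : Fin m → B) :
    rmap A B r (PiTensorProduct.tprod A y)
      = PiTensorProduct.tprod A (∏ i : Fin m, Pi.mulSingle (M := fun _ : Fin k => B) (r i) (y i)) := by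
  simp [rmap, PiTensorProduct.liftAlgHom, ← PiTensorProduct.tprod_prod]

lemma insN_tprod (n j : ℕ) (hj : j ≤ n+1) (y : Fin (n+1) → B) :
    insN A B n j hj (PiTensorProduct.tprod A y)
      = PiTensorProduct.tprod A (fun i : Fin (n+2) =>
          if h1 : i.val < j then y ⟨i.val, by omega⟩
          else if h2 : i.val = j then 1
          else y ⟨i.val - 1, by have := i.isLt; omega⟩) := by
  rw [insN, rmap_tprod]
  congr 1
  funext i
  rw [Finset.prod_apply]
  by_cases h1 : i.val < j
  · rw [Finset.prod_eq_single (⟨i.val, by omega⟩ : Fin (n+1))]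
    · rw [dif_pos h1]
      rw [dif_pos (show (⟨i.val, by omega⟩ : Fin (n+1)).val < j from h1)]
      rw [show (⟨(⟨i.val, by omega⟩ : Fin (n+1)).val, by omega⟩ : Fin (n+2)) = i from Fin.ext rfl]
      simp
    · intro b _ hb
      have hb' : (b : ℕ) ≠ i.val := fun hh => hb (Fin.ext hh)
      apply Pi.mulSingle_eq_of_ne
      intro h
      have hv := congrArg Fin.val h
      by_cases hb2 : (b : ℕ) < j
      · rw [dif_pos hb2] at hv; simp at hv; omega
      · rw [dif_neg hb2] at hv; simp at hv; omega
    · simp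
  · by_cases h2 : i.val = j
    · rw [Finset.prod_eq_one]
      · rw [dif_neg h1, dif_pos h2]
      · intro b _
        apply Pi.mulSingle_eq_of_ne
        intro h
        have hv := congrArg Fin.val h
        by_cases hb2 : (b : ℕ) < j
        · rw [dif_pos hb2] at hv; simp at hv; omega
        · rw [dif_neg hb2] at hv; simp at hv; omega
    · rw [Finset.prod_eq_single (⟨i.val - 1, by have := i.isLt; omega⟩ : Fin (n+1))]
      · rw [dif_neg h1, dif_neg h2]
        rw [dif_neg (show ¬ ((⟨i.val - 1, by have := i.isLt; omega⟩ : Fin (n+1)).val < j) from by simp; omega)]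
        rw [show (⟨(⟨i.val - 1, by have := i.isLt; omega⟩ : Fin (n+1)).val + 1, by have := i.isLt; omega⟩ : Fin (n+2)) = i from Fin.ext (by simp; omega)]
        simp
      · intro b _ hb
        have hb' : (b : ℕ) ≠ i.val - 1 := fun hh => hb (Fin.ext hh)
        apply Pi.mulSingle_eq_of_ne
        intro h
        have hv := congrArg Fin.val h
        by_cases hb2 : (b : ℕ) < j
        · rw [dif_pos hb2] at hv; simp at hv; omega
        · rw [dif_neg hb2] at hv; simp at hv; omega
      · simp
lemma wedgeD_eq_zero (m : ℕ) (f : Fin m → Ω[B⁄A]) (i : Fin m) (hf : f i = 0) :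
    wedgeD A B m f = 0 := by
  have : f = Function.update f i 0 := by rw [← hf, Function.update_eq_self]
  apply Subtype.ext
  show ExteriorAlgebra.ιMulti B m f = 0
  rw [this]
  exact (ExteriorAlgebra.ιMulti B m).map_update_zero f i


/-- (2 invertible in `A`.)  Under the identification of `Λⁿ Ω¹_{B/A}`
with `⋂ⱼ J̃_{j−1,j} ⊆ Cₙ`, the alternating sum `eₙ = ∑ (−1)^j dⱼ` of the unit-insertion
maps induces the exterior derivative: `Ψ_{n+1}(eₙ x) = d(Ψₙ x)` for `x ∈ ⋂ⱼ J̃_{j−1,j}`. -/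
theorem statement17 (n : ℕ) (h2 : IsUnit (2 : A))
    (Ψ : Cq A B (n) →ₗ[A] ⋀[B]^(n) (Ω[B⁄A]))
    (hΨ : ∀ y : Fin (n+1) → B,
      Ψ (Ideal.Quotient.mk (Kideal A B (n)) (PiTensorProduct.tprod A y))
        = y 0 • wedgeD A B (n) (fun i => KaehlerDifferential.D A B (y i.succ)))
    (Ψ' : Cq A B (n+1) →ₗ[A] ⋀[B]^(n+1) (Ω[B⁄A]))
    (hΨ' : ∀ y : Fin (n+1+1) → B,
      Ψ' (Ideal.Quotient.mk (Kideal A B (n+1)) (PiTensorProduct.tprod A y))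
        = y 0 • wedgeD A B (n+1) (fun i => KaehlerDifferential.D A B (y i.succ)))
    (dbar : Fin (n+2) → (Cq A B n →ₗ[A] Cq A B (n+1)))
    (hdbar : ∀ (j : Fin (n+2)) (x : Bpow A B (n+1)),
      dbar j (Ideal.Quotient.mk (Kideal A B n) x)
        = Ideal.Quotient.mk (Kideal A B (n+1))
            (insN A B n j.val (by have := j.isLt; omega) x))
    (dR : (⋀[B]^n (Ω[B⁄A])) →ₗ[A] ⋀[B]^(n+1) (Ω[B⁄A]))
    (hdR : ∀ y : Fin (n+1) → B,
      dR (y 0 • wedgeD A B n (fun i => KaehlerDifferential.D A B (y i.succ)))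
        = wedgeD A B (n+1) (fun i => KaehlerDifferential.D A B (y i))) :
    ∀ x ∈ ⨅ j : Fin n, Jt A B n j.val (j.val+1) (by omega) (by have := j.isLt; omega),
      Ψ' (∑ j : Fin (n+2), ((-1 : ℤ) ^ (j : ℕ)) • dbar j x) = dR (Ψ x) := by
  intro x hx
  clear hx
  obtain ⟨z, rfl⟩ := Ideal.Quotient.mk_surjective x
  have key : ∀ y : Fin (n+1) → B,
      Ψ' (∑ j : Fin (n+2), ((-1 : ℤ) ^ (j : ℕ)) •
          dbar j (Ideal.Quotient.mk (Kideal A B n) (PiTensorProduct.tprod A y)))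
        = dR (Ψ (Ideal.Quotient.mk (Kideal A B n) (PiTensorProduct.tprod A y))) := by
    intro y
    have main : ∀ j : Fin (n+2),
        Ψ' (dbar j (Ideal.Quotient.mk (Kideal A B n) (PiTensorProduct.tprod A y)))
          = if (j : ℕ) = 0 then wedgeD A B (n+1) (fun i => KaehlerDifferential.D A B (y i))
            else 0 := by
      intro j
      rw [hdbar, insN_tprod, hΨ']
      by_cases h0 : (j : ℕ) = 0
      · rw [if_pos h0]
        rw [dif_neg (by simp [h0]), dif_pos (by simp [h0]), one_smul]
        congr 1
        funext i
        congr 1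
        rw [dif_neg (by simp [h0]), dif_neg (by simp [h0, Fin.val_succ])]
        exact congrArg y (Fin.ext (by simp [Fin.val_succ]))
      · rw [if_neg h0]
        rw [wedgeD_eq_zero A B (n+1) _ ⟨(j:ℕ) - 1, by have := j.isLt; omega⟩
          (by
            rw [dif_neg (by simp [Fin.val_succ]; omega), dif_pos (by simp [Fin.val_succ]; omega)]
            exact Derivation.map_one_eq_zero _), smul_zero]
    rw [map_sum]
    simp only [map_zsmul, main]
    rw [Fin.sum_univ_succ]
    simp
    rw [hΨ, hdR]
  induction z using PiTensorProduct.induction_on with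
  | smul_tprod a y =>
      have hmk : (Ideal.Quotient.mk (Kideal A B n)) (a • PiTensorProduct.tprod A y)
          = a • Ideal.Quotient.mk (Kideal A B n) (PiTensorProduct.tprod A y) := by
        rw [← Ideal.Quotient.mkₐ_eq_mk A]
        exact map_smul _ a _
      rw [hmk]
      simp only [map_smul]
      have : (∑ j : Fin (n+2), ((-1 : ℤ) ^ (j : ℕ)) •
            (a • dbar j (Ideal.Quotient.mk (Kideal A B n) (PiTensorProduct.tprod A y))))
          = a • ∑ j : Fin (n+2), ((-1 : ℤ) ^ (j : ℕ)) •
            dbar j (Ideal.Quotient.mk (Kideal A B n) (PiTensorProduct.tprod A y)) := by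
        rw [show (∑ j : Fin (n+2), ((-1 : ℤ) ^ (j : ℕ)) •
              (a • dbar j (Ideal.Quotient.mk (Kideal A B n) (PiTensorProduct.tprod A y))))
            = ∑ j : Fin (n+2), a • (((-1 : ℤ) ^ (j : ℕ)) •
              dbar j (Ideal.Quotient.mk (Kideal A B n) (PiTensorProduct.tprod A y))) from
          Finset.sum_congr rfl fun j _ => smul_comm _ _ _]
        exact (Finset.smul_sum (r := a) (f := fun j : Fin (n+2) => ((-1 : ℤ) ^ (j : ℕ)) • dbar j (Ideal.Quotient.mk (Kideal A B n) (PiTensorProduct.tprod A y)))).symm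
      rw [this, map_smul, key]
  | add u v hu hv =>
      rw [map_add]
      simp only [map_add, smul_add, Finset.sum_add_distrib, map_add]
      rw [hu, hv]
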